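/- A ring extension $R/S$ is split (i.e., there is an $(S,S)$-bimodule projection $E: R \to S$ with $E|_S = \mathrm{id}$) if and only if the bimodule ${}_S R_R$ is a separable bimodule. -/

import Mathlib

variable {R : Type*} [Ring R]

/-- The left dual `*(_S R_R) = Hom(_S R, _S S)` of the bimodule `_S R_R`:
additive maps `R → S` that are left `S`-linear, as an additive subgroup of `R →+ S`. -/
def LeftSDual (S : Subring R) : AddSubgroup (R →+ S) where
  carrier := {f | ∀ (s : S) (a : R), f ((s : R) * a) = s * f a}
  add_mem' := by intro f g hf hg s a; simp [hf s a, hg s a, mul_add]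
  zero_mem' := by intro s a; simp
  neg_mem' := by intro f hf s a; simp [hf s a]

/-- The left `R`-action on `Hom(_S R, _S S)`: `(r·f)(m) = f(m r)`. -/
def LeftSDual.lR {S : Subring R} (r : R) (f : LeftSDual S) : LeftSDual S :=
  ⟨(f : R →+ S).comp (AddMonoidHom.mulRight r), fun s a => by
    simpa [mul_assoc] using f.2 s (a * r)⟩

/-- The right `S`-action on `Hom(_S R, _S S)`: `(f·s)(m) = f(m) s`. -/
def LeftSDual.rS {S : Subring R} (s : S) (f : LeftSDual S) : LeftSDual S :=
  ⟨(AddMonoidHom.mulRight s).comp (f : R →+ S), fun t a => by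
    simp [f.2 t a, mul_assoc]⟩

/-- A ring extension `R/S` is split — there is an `(S,S)`-bimodule projection
`E : R → S` with `E|_S = id` — if and only if the bimodule `_S R_R` is a
separable bimodule, i.e. there is `e = ∑ᵢ mᵢ ⊗ fᵢ ∈ R ⊗_R Hom(_S R, _S S)`
with `∑ᵢ (mᵢ)fᵢ = 1_S` which is `S`-central (centrality in the tensor product
over `R` being detected by all `R`-balanced biadditive maps). -/
theorem biseparable_stmt11 (S : Subring R) :
    (∃ E : R →+ S, (∀ s : S, E (s : R) = s) ∧
      (∀ (s : S) (r : R), E ((s : R) * r) = s * E r) ∧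
      (∀ (s : S) (r : R), E (r * (s : R)) = E r * s)) ↔
    (∃ (n : ℕ) (m : Fin n → R) (f : Fin n → LeftSDual S),
      (∑ i, (f i : R →+ S) (m i)) = 1 ∧
      ∀ (Z : Type*) [AddCommGroup Z] (b : R → LeftSDual S → Z),
        (∀ a a' g, b (a + a') g = b a g + b a' g) →
        (∀ a g g', b a (g + g') = b a g + b a g') →
        (∀ (r : R) (a : R) (g : LeftSDual S), b (a * r) g = b a (LeftSDual.lR r g)) →
        ∀ s : S, (∑ i, b ((s : R) * m i) (f i)) = ∑ i, b (m i) (LeftSDual.rS s (f i))) := by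
  constructor
  · rintro ⟨E, hE1, hEl, hEr⟩
    refine ⟨1, fun _ => 1, fun _ => ⟨E, hEl⟩, by simpa using hE1 1, ?_⟩
    intro Z _ b hadd _ hbal s
    simp only [Fin.sum_univ_one]
    have h1 : (s : R) * 1 = 1 * (s : R) := by simp
    rw [h1, hbal]
    have heq : LeftSDual.lR (s : R) ⟨E, hEl⟩ = LeftSDual.rS s ⟨E, hEl⟩ :=
      Subtype.ext (AddMonoidHom.ext fun a => hEr s a)
    rw [heq]
  · rintro ⟨n, m, f, hone, hcent⟩
    refine ⟨∑ i, (f i : R →+ S).comp (AddMonoidHom.mulRight (m i)), ?_, ?_, ?_⟩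
    · intro s
      have hE1 : (∑ i, (f i : R →+ S).comp (AddMonoidHom.mulRight (m i))) 1 = 1 := by
        simpa using hone
      have : (∑ i, (f i : R →+ S).comp (AddMonoidHom.mulRight (m i))) ((s:R)) =
          s * (∑ i, (f i : R →+ S).comp (AddMonoidHom.mulRight (m i))) 1 := by
        simp only [AddMonoidHom.finset_sum_apply, AddMonoidHom.coe_comp,
          Function.comp_apply, AddMonoidHom.coe_mulRight, Finset.mul_sum, one_mul]
        exact Finset.sum_congr rfl fun i _ => (f i).2 s (m i)
      rw [this, hE1, mul_one]
    · intro s r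
      simp only [AddMonoidHom.finset_sum_apply, AddMonoidHom.coe_comp,
        Function.comp_apply, AddMonoidHom.coe_mulRight, Finset.mul_sum]
      refine Finset.sum_congr rfl fun i _ => ?_
      rw [mul_assoc]
      exact (f i).2 s (r * m i)
    · intro s r
      simp only [AddMonoidHom.finset_sum_apply, AddMonoidHom.coe_comp,
        Function.comp_apply, AddMonoidHom.coe_mulRight]
      by_contra hne
      obtain ⟨c, hc⟩ := CharacterModule.exists_character_apply_ne_zero_of_ne_zero
        (sub_ne_zero.mpr hne)
      apply hc
      rw [map_sub, sub_eq_zero]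
      have key := hcent (ULift (AddCircle (1 : ℚ)))
        (fun a g => ULift.up (c ((g : R →+ S) (r * a))))
        (by intro a a' g; exact congrArg ULift.up (by rw [mul_add, map_add, map_add]))
        (by intro a g g'; exact congrArg ULift.up (by
              show c ((↑g + ↑g' : R →+ S) (r * a)) = _
              rw [AddMonoidHom.add_apply, map_add]))
        (by intro r' a g
            show ULift.up (c ((g : R →+ S) (r * (a * r')))) =
              ULift.up (c ((g : R →+ S) (r * a * r')))
            rw [mul_assoc]) s
      have key' : (∑ i, c ((f i : R →+ S) (r * ((s : R) * m i)))) =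
          ∑ i, c ((LeftSDual.rS s (f i) : R →+ S) (r * m i)) := by
        have key2 := congrArg (⇑(AddEquiv.ulift)) key; rw [map_sum, map_sum] at key2; exact key2
      calc c (∑ i, (f i : R →+ S) (r * (s : R) * m i))
          = ∑ i, c ((f i : R →+ S) (r * ((s : R) * m i))) := by
            rw [map_sum]; simp [mul_assoc]
        _ = ∑ i, c ((LeftSDual.rS s (f i) : R →+ S) (r * m i)) := key'
        _ = c ((∑ i, (f i : R →+ S) (r * m i)) * s) := by
            rw [Finset.sum_mul, map_sum]; rfl
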